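/- arXiv:1706.06469 — 4 statements merged into one kernel-verified Lean document; each statement's English description precedes it below -/
import Mathlib

section
/- Let H be a B×B orthogonal projection matrix with diagonal entries h_{ii}, and suppose h_{ii} < 1 for all i. Let Σ be a diagonal matrix with constant diagonal ν ≥ 0, and let Ψ̃ be the diagonal matrix with entries 1/(1 − h_{ii}). Then tr(Σ(I − H)Ψ̃(I − H)) = Bν. -/
open Matrix BigOperators

/-- If H is a B×B orthogonal projection with h_{ii} < 1 for all i,
Σ = ν•I with ν ≥ 0, and Ψ̃ = diag(1/(1−h_{ii})), then tr(Σ(I−H)Ψ̃(I−H)) = Bν. -/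
theorem trace_HC2_identity {B : ℕ} (H : Matrix (Fin B) (Fin B) ℝ)
    (hsym : H.IsSymm) (hidem : H * H = H) (hdiag : ∀ i, H i i < 1)
    (ν : ℝ) (hν : 0 ≤ ν)
    (Sig Ψt : Matrix (Fin B) (Fin B) ℝ)
    (hSig : Sig = ν • (1 : Matrix (Fin B) (Fin B) ℝ))
    (hΨ : Ψt = Matrix.diagonal (fun i => (1 - H i i)⁻¹)) :
    (Sig * (1 - H) * Ψt * (1 - H)).trace = (B : ℝ) * ν := by
  subst hSig hΨ
  have hproj : (1 - H) * (1 - H) = 1 - H := by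
    simp [sub_mul, mul_sub, hidem]
  have key : ((1 - H) * Matrix.diagonal (fun i => (1 - H i i)⁻¹) * (1 - H)).trace
      = (B : ℝ) := by
    rw [Matrix.trace_mul_cycle, hproj]
    rw [Matrix.trace]
    have : ∀ i, ((1 - H) * Matrix.diagonal (fun i => (1 - H i i)⁻¹)) i i = 1 := by
      intro i
      rw [Matrix.mul_diagonal]
      have : (1 - H) i i = 1 - H i i := by simp [Matrix.sub_apply, Matrix.one_apply]
      rw [this, mul_inv_cancel₀ (by linarith [hdiag i])]
    simp [Matrix.diag, this]
  calc ((ν • (1 : Matrix (Fin B) (Fin B) ℝ)) * (1 - H) * Matrix.diagonal (fun i => (1 - H i i)⁻¹) * (1 - H)).trace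
      = ν * ((1 - H) * Matrix.diagonal (fun i => (1 - H i i)⁻¹) * (1 - H)).trace := by
        simp [Matrix.smul_mul, mul_assoc]
    _ = (B : ℝ) * ν := by rw [key]; ring
end

section
/- In a paired randomized experiment with B pairs (n_i = 2, n_{1i} = n_{0i} = 1 for all i), let τ̂_i be the observed treated-minus-control difference in pair i, Δ̂ = B⁻¹ ∑ τ̂_i, and S²_P = (B(B−1))⁻¹ ∑_i (τ̂_i − Δ̂)². Then E[S²_P] − Var(Δ̂) = (B(B−1))⁻¹ ∑_i (τ̄_i − Δ̄)², where τ̄_i is the average treatment effect in pair i and Δ̄ = B⁻¹ ∑ τ̄_i. In particular S²_P is unbiased for Var(Δ̂) if and only if the pair-level average treatment effects τ̄_i are all equal. -/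
open BigOperators Finset

noncomputable def eps : Bool → ℝ := fun b => if b then 1 else -1
lemma eps_sq (b : Bool) : eps b ^ 2 = 1 := by cases b <;> simp [eps]
lemma sum_pi_prod {B : ℕ} (f : Fin B → Bool → ℝ) :
    ∑ z : Fin B → Bool, ∏ i, f i (z i) = ∏ i, (∑ b, f i b) := (Fintype.prod_sum f).symm
lemma prod_two {B : ℕ} (i j : Fin B) (hij : i ≠ j) (f : Fin B → ℝ)
    (h : ∀ k, k ≠ i → k ≠ j → f k = 1) : ∏ k, f k = f i * f j := by
  rw [← Finset.mul_prod_erase univ f (mem_univ i),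
    ← Finset.mul_prod_erase _ f (by simp [hij.symm] : j ∈ univ.erase i)]
  rw [Finset.prod_eq_one, mul_one]
  intro k hk
  simp only [Finset.mem_erase] at hk
  exact h k hk.2.1 hk.1
lemma K1 {B : ℕ} (i : Fin B) : ∑ z : Fin B → Bool, eps (z i) = 0 := by
  have key : ∑ z : Fin B → Bool, eps (z i)
      = ∏ k, ∑ b, (if k = i then eps b else 1) := by
    rw [← sum_pi_prod]
    refine Finset.sum_congr rfl fun z _ => ?_
    rw [Finset.prod_ite_eq' univ i (fun k => eps (z k))]; simp
  rw [key]
  apply Finset.prod_eq_zero (Finset.mem_univ i)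
  simp [eps]
lemma K2 {B : ℕ} (i j : Fin B) :
    ∑ z : Fin B → Bool, eps (z i) * eps (z j) = if i = j then (2:ℝ) ^ B else 0 := by
  by_cases hij : i = j
  · subst hij
    simp only [if_pos]
    have h1 : ∀ z : Fin B → Bool, eps (z i) * eps (z i) = 1 := fun z => by
      cases z i <;> simp [eps]
    simp_rw [h1]
    simp [Finset.card_univ]
  · rw [if_neg hij]
    have key : ∑ z : Fin B → Bool, eps (z i) * eps (z j)
        = ∏ k, ∑ b, (if k = i then eps b else if k = j then eps b else 1) := by
      rw [← sum_pi_prod]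
      refine Finset.sum_congr rfl fun z _ => ?_
      rw [prod_two i j hij _ (by intro k h1 h2; simp [h1, h2])]
      simp [hij]
    rw [key]
    apply Finset.prod_eq_zero (Finset.mem_univ i)
    simp [eps]
lemma Lzero {B : ℕ} (g : Fin B → ℝ) :
    ∑ z : Fin B → Bool, ∑ j, eps (z j) * g j = 0 := by
  rw [Finset.sum_comm]
  refine Finset.sum_eq_zero fun j _ => ?_
  rw [← Finset.sum_mul, K1, zero_mul]
lemma Lone {B : ℕ} (g : Fin B → ℝ) (i : Fin B) :
    ∑ z : Fin B → Bool, eps (z i) * ∑ j, eps (z j) * g j = 2 ^ B * g i := by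
  simp_rw [Finset.mul_sum]
  rw [Finset.sum_comm]
  have h : ∀ j, ∑ z : Fin B → Bool, eps (z i) * (eps (z j) * g j)
      = (if i = j then (2:ℝ) ^ B else 0) * g j := by
    intro j
    simp_rw [← mul_assoc]
    rw [← Finset.sum_mul, K2]
  simp_rw [h]
  simp [Finset.sum_ite_eq]
lemma Ltwo {B : ℕ} (g : Fin B → ℝ) :
    ∑ z : Fin B → Bool, (∑ j, eps (z j) * g j) ^ 2 = 2 ^ B * ∑ j, g j ^ 2 := by
  simp_rw [sq, Finset.sum_mul]
  rw [Finset.sum_comm]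
  have h : ∀ j, ∑ z : Fin B → Bool, (eps (z j) * g j) * (∑ k, eps (z k) * g k)
      = 2 ^ B * (g j * g j) := by
    intro j
    have h2 : ∀ z : Fin B → Bool, (eps (z j) * g j) * (∑ k, eps (z k) * g k)
        = g j * (eps (z j) * ∑ k, eps (z k) * g k) := fun z => by ring
    simp_rw [h2]
    rw [← Finset.mul_sum, Lone]
    ring
  simp_rw [h]
  rw [← Finset.mul_sum]


/-- In a paired experiment with B pairs, with one of the two units of each
pair treated uniformly at random (independently across pairs),
E[S²_P] − Var(Δ̂) = (B(B−1))⁻¹ ∑ (τ̄_i − Δ̄)², and S²_P is unbiased for Var(Δ̂) iff all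
pair-level average treatment effects τ̄_i are equal. Here expectations are uniform
averages over the 2^B equiprobable assignments z : Fin B → Bool, where z i = true means
unit 0 of pair i is treated. -/
theorem paired_variance_bias {B : ℕ} (hB : 2 ≤ B)
    (r1 r0 : Fin B → Fin 2 → ℝ)
    (τhat : Fin B → (Fin B → Bool) → ℝ)
    (hτhat : τhat = fun i z => if z i then r1 i 0 - r0 i 1 else r1 i 1 - r0 i 0)
    (τbar : Fin B → ℝ)
    (hτbar : τbar = fun i => ((r1 i 0 - r0 i 0) + (r1 i 1 - r0 i 1)) / 2)
    (Δhat : (Fin B → Bool) → ℝ) (hΔhat : Δhat = fun z => (∑ i, τhat i z) / B)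
    (Δbar : ℝ) (hΔbar : Δbar = (∑ i, τbar i) / B)
    (S2P : (Fin B → Bool) → ℝ)
    (hS2P : S2P = fun z => (∑ i, (τhat i z - Δhat z) ^ 2) / ((B : ℝ) * ((B : ℝ) - 1)))
    (ES2P VarΔ : ℝ)
    (hE : ES2P = (∑ z : Fin B → Bool, S2P z) / 2 ^ B)
    (hV : VarΔ = (∑ z : Fin B → Bool, (Δhat z - Δbar) ^ 2) / 2 ^ B) :
    ES2P - VarΔ = (∑ i, (τbar i - Δbar) ^ 2) / ((B : ℝ) * ((B : ℝ) - 1)) ∧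
      (ES2P = VarΔ ↔ ∀ i j, τbar i = τbar j) := by
  have hBR : (2:ℝ) ≤ (B:ℝ) := by exact_mod_cast hB
  have hB0 : (B : ℝ) ≠ 0 := by linarith
  have hB1 : (B : ℝ) - 1 ≠ 0 := by linarith
  have h2B : (2:ℝ) ^ B ≠ 0 := by positivity
  set d : Fin B → ℝ := fun i => ((r1 i 0 - r0 i 1) - (r1 i 1 - r0 i 0)) / 2 with hd
  set Sc : ℝ := ∑ i, (τbar i - Δbar) ^ 2 with hSc
  set Sd : ℝ := ∑ i, d i ^ 2 with hSd
  have F1 : ∀ i (z : Fin B → Bool), τhat i z = τbar i + eps (z i) * d i := by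
    intro i z
    subst hτhat hτbar
    cases hzi : z i <;> simp [eps, hzi, hd] <;> ring
  have F2 : ∀ z : Fin B → Bool, Δhat z = Δbar + (∑ j, eps (z j) * d j) / B := by
    intro z
    rw [hΔhat, hΔbar]
    simp only
    rw [Finset.sum_congr rfl fun i _ => F1 i z, Finset.sum_add_distrib, add_div]
  have hcard : (Finset.univ : Finset (Fin B → Bool)).card = 2 ^ B := by
    simp [Finset.card_univ]
  have hEi : ∀ i, ∑ z : Fin B → Bool, (τhat i z - Δhat z) ^ 2
      = 2 ^ B * ((τbar i - Δbar) ^ 2 + d i ^ 2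
          + Sd / (B:ℝ) ^ 2 - 2 * d i ^ 2 / B) := by
    intro i
    have expand : ∀ z : Fin B → Bool, (τhat i z - Δhat z) ^ 2
        = ((τbar i - Δbar) ^ 2 + d i ^ 2)
          + ((∑ j, eps (z j) * d j) ^ 2 / (B:ℝ) ^ 2
          + ((2 * (τbar i - Δbar) * d i) * eps (z i)
          - ((2 * (τbar i - Δbar) / B) * (∑ j, eps (z j) * d j)
          + (2 * d i / B) * (eps (z i) * ∑ j, eps (z j) * d j)))) := by
      intro z
      rw [F1 i z, F2 z]
      linear_combination (d i ^ 2) * eps_sq (z i)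
    simp_rw [expand]
    rw [Finset.sum_add_distrib, Finset.sum_add_distrib, Finset.sum_add_distrib,
      Finset.sum_sub_distrib, Finset.sum_add_distrib,
      ← Finset.sum_div, Ltwo, ← Finset.mul_sum, K1, mul_zero,
      ← Finset.mul_sum, Lzero, mul_zero, ← Finset.mul_sum, Lone]
    simp only [Finset.sum_const, hcard, nsmul_eq_mul, ← hSd]
    push_cast
    ring
  have hsum : ∑ z : Fin B → Bool, ∑ i, (τhat i z - Δhat z) ^ 2
      = 2 ^ B * (Sc + (((B:ℝ) - 1) / B) * Sd) := by
    rw [Finset.sum_comm, Finset.sum_congr rfl fun i _ => hEi i, ← Finset.mul_sum]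
    congr 1
    rw [Finset.sum_sub_distrib, Finset.sum_add_distrib, Finset.sum_add_distrib,
      Finset.sum_const, Finset.card_univ, Fintype.card_fin, nsmul_eq_mul,
      ← Finset.sum_div, ← hSc, ← hSd]
    have h2 : ∑ i, 2 * d i ^ 2 = 2 * Sd := by rw [← Finset.mul_sum, hSd]
    rw [h2]
    field_simp
    ring
  have hES : ES2P = (Sc + (((B:ℝ) - 1) / B) * Sd) / ((B:ℝ) * ((B:ℝ) - 1)) := by
    rw [hE, hS2P]
    simp only
    rw [← Finset.sum_div, hsum]
    field_simp
  have hVar : VarΔ = Sd / (B:ℝ) ^ 2 := by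
    rw [hV]
    have hpt : ∀ z : Fin B → Bool, (Δhat z - Δbar) ^ 2
        = (∑ j, eps (z j) * d j) ^ 2 / (B:ℝ) ^ 2 := by
      intro z
      rw [F2 z]
      ring
    simp_rw [hpt]
    rw [← Finset.sum_div, Ltwo]
    field_simp
    ring
  have part1 : ES2P - VarΔ = Sc / ((B : ℝ) * ((B : ℝ) - 1)) := by
    rw [hES, hVar]
    field_simp
    ring
  refine ⟨part1, ?_⟩
  constructor
  · intro h
    have h0 : Sc = 0 := by
      have hz : Sc / ((B : ℝ) * ((B : ℝ) - 1)) = 0 := by rw [← part1]; linarith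
      have := div_eq_zero_iff.mp hz
      rcases this with h' | h'
      · exact h'
      · exact absurd h' (mul_ne_zero hB0 hB1)
    have hall : ∀ i, τbar i - Δbar = 0 := by
      intro i
      have hz := (Finset.sum_eq_zero_iff_of_nonneg
        (fun i _ => sq_nonneg (τbar i - Δbar))).mp h0 i (Finset.mem_univ i)
      exact pow_eq_zero_iff (by norm_num : (2:ℕ) ≠ 0) |>.mp hz
    intro i j
    have hi := hall i
    have hj := hall j
    linarith
  · intro h
    have hall : ∀ i, τbar i = Δbar := by
      intro i
      rw [hΔbar]
      have hs : ∑ j, τbar j = B * τbar i := by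
        rw [Finset.sum_congr rfl fun j _ => h j i]
        rw [Finset.sum_const, Finset.card_univ, Fintype.card_fin, nsmul_eq_mul]
      rw [hs]
      field_simp
    have h0 : Sc = 0 := Finset.sum_eq_zero fun i _ => by rw [hall i]; ring
    rw [h0] at part1
    norm_num at part1
    linarith
end

section
/- Let τ̂₁,…,τ̂_B be independent random variables with E[τ̂_i] = τ̄_i and Var(τ̂_i) = v_i. Let Q be a fixed B×L matrix of full column rank with hat matrix H = H_Q, diagonal entries h_{ii} < 1, and Ψ the diagonal matrix with entries 1/(1−h_{ii})². Let W be a fixed diagonal matrix. Then E[τ̂ᵀW(I−H)Ψ(I−H)Wτ̂] = ∑_i w_i² v_i (1 + ∑_{j≠i} h_{ij}²/(1−h_{jj})²) + τ̄ᵀW(I−H)Ψ(I−H)Wτ̄, and hence B² S²₂(Q) := τ̂ᵀW(I−H)Ψ(I−H)Wτ̂ satisfies E[B² S²₂(Q)] ≥ ∑_i w_i² v_i. -/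
open Matrix BigOperators MeasureTheory ProbabilityTheory

private lemma integrable_mul_of_L2 {Ω : Type*} [MeasurableSpace Ω] {P : Measure Ω}
    {f g : Ω → ℝ} (hf : MemLp f 2 P) (hg : MemLp g 2 P) :
    Integrable (fun ω => f ω * g ω) P := by
  have h1 := (hf.add hg).integrable_sq
  have h2 := hf.integrable_sq
  have h3 := hg.integrable_sq
  have heq : (fun ω => f ω * g ω)
      = fun ω => (((f + g) ω) ^ 2 - (f ω) ^ 2 - (g ω) ^ 2) / 2 := by
    funext ω; simp [Pi.add_apply]; ring
  rw [heq]
  exact ((h1.sub h2).sub h3).div_const 2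

private lemma psd_aux {n : ℕ} (A : Matrix (Fin n) (Fin n) ℝ) (d : Fin n → ℝ)
    (hd : ∀ i, 0 ≤ d i) (x : Fin n → ℝ) :
    0 ≤ x ⬝ᵥ ((Aᵀ * Matrix.diagonal d * A) *ᵥ x) := by
  have h1 : (Aᵀ * Matrix.diagonal d * A) *ᵥ x
      = Aᵀ *ᵥ (Matrix.diagonal d *ᵥ (A *ᵥ x)) := by
    rw [← Matrix.mulVec_mulVec, ← Matrix.mulVec_mulVec]
  rw [h1, Matrix.dotProduct_mulVec, Matrix.vecMul_transpose]
  refine Finset.sum_nonneg fun i _ => ?_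
  simp only [Matrix.mulVec_diagonal]
  have : (A *ᵥ x) i * (d i * (A *ᵥ x) i) = d i * ((A *ᵥ x) i) ^ 2 := by ring
  rw [this]
  exact mul_nonneg (hd i) (sq_nonneg _)

/-- For independent τ̂_i with means τ̄_i and variances v_i, a fixed full-rank
design Q with hat matrix H (diagonal entries < 1), Ψ = diag(1/(1−h_{ii})²), and W = diag(w),
E[τ̂ᵀW(I−H)Ψ(I−H)Wτ̂] = ∑ w_i²v_i(1 + ∑_{j≠i} h_{ij}²/(1−h_{jj})²) + τ̄ᵀW(I−H)Ψ(I−H)Wτ̄,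
and hence E[B²S²₂(Q)] = E[τ̂ᵀW(I−H)Ψ(I−H)Wτ̂] ≥ ∑ w_i²v_i. -/
theorem HC3_estimator_conservative {B L : ℕ} {Ω : Type*} [MeasurableSpace Ω]
    (P : Measure Ω) [IsProbabilityMeasure P]
    (τhat : Fin B → Ω → ℝ)
    (hind : iIndepFun τhat P)
    (hL2 : ∀ i, MemLp (τhat i) 2 P)
    (τbar v : Fin B → ℝ)
    (hmean : ∀ i, ∫ ω, τhat i ω ∂P = τbar i)
    (hvar : ∀ i, variance (τhat i) P = v i)
    (Q : Matrix (Fin B) (Fin L) ℝ) (hrank : Q.rank = L)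
    (H : Matrix (Fin B) (Fin B) ℝ) (hH : H = Q * (Qᵀ * Q)⁻¹ * Qᵀ)
    (hdiag : ∀ i, H i i < 1)
    (Ψ : Matrix (Fin B) (Fin B) ℝ)
    (hΨ : Ψ = Matrix.diagonal fun i => ((1 - H i i) ^ 2)⁻¹)
    (w : Fin B → ℝ) (W : Matrix (Fin B) (Fin B) ℝ) (hW : W = Matrix.diagonal w) :
    (∫ ω, (fun i => τhat i ω) ⬝ᵥ ((W * (1 - H) * Ψ * (1 - H) * W) *ᵥ fun i => τhat i ω) ∂P
        = ∑ i, w i ^ 2 * v i *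
            (1 + ∑ j ∈ Finset.univ.filter (fun j => j ≠ i), (H i j) ^ 2 / (1 - H j j) ^ 2)
          + τbar ⬝ᵥ ((W * (1 - H) * Ψ * (1 - H) * W) *ᵥ τbar)) ∧
      ∑ i, w i ^ 2 * v i
        ≤ ∫ ω, (fun i => τhat i ω) ⬝ᵥ
            ((W * (1 - H) * Ψ * (1 - H) * W) *ᵥ fun i => τhat i ω) ∂P := by
  set M : Matrix (Fin B) (Fin B) ℝ := W * (1 - H) * Ψ * (1 - H) * W with hM
  -- symmetry of H
  have hHsym : Hᵀ = H := by
    rw [hH]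
    simp only [Matrix.transpose_mul, Matrix.transpose_transpose, Matrix.transpose_nonsing_inv,
      Matrix.transpose_mul, Matrix.transpose_transpose]
    rw [Matrix.mul_assoc]
  have hHs : ∀ i j, H i j = H j i := fun i j =>
    ((congrFun (congrFun hHsym i) j).symm).trans (Matrix.transpose_apply H i j)
  -- nonvanishing denominators
  have hne : ∀ i, (1 : ℝ) - H i i ≠ 0 := fun i => by
    have := hdiag i; linarith
  -- expansion of quadratic form
  have hexp : ∀ x : Fin B → ℝ, x ⬝ᵥ (M *ᵥ x) = ∑ i, ∑ j, M i j * (x i * x j) := by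
    intro x
    simp only [dotProduct, Matrix.mulVec, dotProduct, Finset.mul_sum]
    exact Finset.sum_congr rfl fun i _ => Finset.sum_congr rfl fun j _ => by ring
  -- integrability of products
  have hint : ∀ i j, Integrable (fun ω => τhat i ω * τhat j ω) P :=
    fun i j => integrable_mul_of_L2 (hL2 i) (hL2 j)
  -- second moments
  have hval : ∀ i j, ∫ ω, τhat i ω * τhat j ω ∂P
      = τbar i * τbar j + (if i = j then v i else 0) := by
    intro i j
    by_cases hij : i = j
    · subst hij
      have hv := variance_eq_sub (hL2 i)
      rw [hvar i, hmean i] at hv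
      have : ∫ ω, τhat i ω * τhat i ω ∂P = ∫ ω, (τhat i ω) ^ 2 ∂P := by
        refine integral_congr_ae (Filter.Eventually.of_forall fun ω => ?_)
        ring
      have hv2 : ∫ ω, (τhat i ω) ^ 2 ∂P = v i + τbar i ^ 2 := by
        have : (∫ x, ((τhat i) ^ 2) x ∂P) = ∫ ω, (τhat i ω) ^ 2 ∂P := rfl
        linarith [hv, this ▸ hv]
      rw [this, hv2, if_pos rfl]
      ring
    · simp only [if_neg hij, add_zero]
      have hI := (hind.indepFun hij).integral_mul_eq_mul_integral
        (hL2 i).aestronglyMeasurable (hL2 j).aestronglyMeasurable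
      have : ∫ ω, τhat i ω * τhat j ω ∂P = ∫ ω, (τhat i * τhat j) ω ∂P := rfl
      rw [this, hI]
      simp only [hmean]
  -- compute the integral
  have hkey : ∫ ω, (fun i => τhat i ω) ⬝ᵥ (M *ᵥ fun i => τhat i ω) ∂P
      = ∑ i, M i i * v i + τbar ⬝ᵥ (M *ᵥ τbar) := by
    have h1 : ∫ ω, (fun i => τhat i ω) ⬝ᵥ (M *ᵥ fun i => τhat i ω) ∂P
        = ∑ i, ∑ j, M i j * ∫ ω, τhat i ω * τhat j ω ∂P := by
      calc ∫ ω, (fun i => τhat i ω) ⬝ᵥ (M *ᵥ fun i => τhat i ω) ∂P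
          = ∫ ω, ∑ i, ∑ j, M i j * (τhat i ω * τhat j ω) ∂P := by
            refine integral_congr_ae (Filter.Eventually.of_forall fun ω => ?_)
            exact hexp _
        _ = ∑ i, ∑ j, M i j * ∫ ω, τhat i ω * τhat j ω ∂P := by
            rw [integral_finset_sum (f := fun i ω => ∑ j, M i j * (τhat i ω * τhat j ω)) _ fun i _ =>
              integrable_finset_sum _ fun j _ => (hint i j).const_mul _]
            refine Finset.sum_congr rfl fun i _ => ?_
            rw [integral_finset_sum (f := fun j ω => M i j * (τhat i ω * τhat j ω)) _
              fun j _ => (hint i j).const_mul _]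
            exact Finset.sum_congr rfl fun j _ => integral_const_mul _ _
    rw [h1]
    have h2 : ∀ i j, M i j * (τbar i * τbar j + (if i = j then v i else 0))
        = M i j * (τbar i * τbar j) + (if i = j then M i i * v i else 0) := by
      intro i j
      by_cases hij : i = j
      · subst hij; simp [mul_add]
      · simp [hij]
    calc ∑ i, ∑ j, M i j * ∫ ω, τhat i ω * τhat j ω ∂P
        = ∑ i, ∑ j, (M i j * (τbar i * τbar j) + (if i = j then M i i * v i else 0)) := by
          refine Finset.sum_congr rfl fun i _ => Finset.sum_congr rfl fun j _ => ?_
          rw [hval i j, h2 i j]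
      _ = ∑ i, (∑ j, M i j * (τbar i * τbar j) + M i i * v i) := by
          refine Finset.sum_congr rfl fun i _ => ?_
          rw [Finset.sum_add_distrib, Finset.sum_ite_eq Finset.univ i (fun _ => M i i * v i)]
          simp
      _ = ∑ i, M i i * v i + τbar ⬝ᵥ (M *ᵥ τbar) := by
          rw [Finset.sum_add_distrib, hexp τbar, add_comm]
  -- diagonal entries of M
  have hMii : ∀ i, M i i = w i ^ 2 *
      (1 + ∑ j ∈ Finset.univ.filter (fun j => j ≠ i), (H i j) ^ 2 / (1 - H j j) ^ 2) := by
    intro i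
    have e1 : M i i = w i * ((1 - H) * Ψ * (1 - H)) i i * w i := by
      rw [hM, hW]
      rw [show Matrix.diagonal w * (1 - H) * Ψ * (1 - H) * Matrix.diagonal w
        = Matrix.diagonal w * ((1 - H) * Ψ * (1 - H)) * Matrix.diagonal w by
          simp only [Matrix.mul_assoc]]
      rw [Matrix.mul_diagonal, Matrix.diagonal_mul]
    have e2 : ((1 - H) * Ψ * (1 - H)) i i
        = ∑ j, (1 - H) i j * (1 - H) j i * ((1 - H j j) ^ 2)⁻¹ := by
      rw [hΨ]
      rw [Matrix.mul_apply]
      refine Finset.sum_congr rfl fun j _ => ?_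
      rw [Matrix.mul_diagonal]; ring
    have e3 : ∑ j, (1 - H) i j * (1 - H) j i * ((1 - H j j) ^ 2)⁻¹
        = 1 + ∑ j ∈ Finset.univ.filter (fun j => j ≠ i), (H i j) ^ 2 / (1 - H j j) ^ 2 := by
      rw [Finset.filter_ne', ← Finset.add_sum_erase Finset.univ _ (Finset.mem_univ i)]
      congr 1
      · simp only [Matrix.sub_apply, Matrix.one_apply_eq]
        rw [← pow_two]
        exact mul_inv_cancel₀ (pow_ne_zero 2 (hne i))
      · refine Finset.sum_congr rfl fun j hj => ?_
        have hji : j ≠ i := Finset.ne_of_mem_erase hj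
        simp only [Matrix.sub_apply, Matrix.one_apply_ne hji, Matrix.one_apply_ne (Ne.symm hji)]
        rw [hHs j i]
        field_simp
        ring
    rw [e1, e2, e3]; ring
  -- positivity of the quadratic form at τbar
  have hpsd : 0 ≤ τbar ⬝ᵥ (M *ᵥ τbar) := by
    have hMeq : M = ((1 - H) * W)ᵀ * Matrix.diagonal (fun i => ((1 - H i i) ^ 2)⁻¹)
        * ((1 - H) * W) := by
      rw [hM, hΨ]
      have hWt : Wᵀ = W := by rw [hW, Matrix.diagonal_transpose]
      have hBt : (1 - H)ᵀ = 1 - H := by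
        rw [Matrix.transpose_sub, Matrix.transpose_one, hHsym]
      rw [Matrix.transpose_mul, hWt, hBt]
      simp only [Matrix.mul_assoc]
    rw [hMeq]
    exact psd_aux _ _ (fun i => by positivity) τbar
  have hvnn : ∀ i, 0 ≤ v i := fun i => (hvar i) ▸ variance_nonneg _ _
  constructor
  · rw [hkey]
    congr 1
    exact Finset.sum_congr rfl fun i _ => by rw [hMii i]; ring
  · rw [hkey]
    have h1 : ∑ i, w i ^ 2 * v i ≤ ∑ i, M i i * v i := by
      refine Finset.sum_le_sum fun i _ => ?_
      rw [hMii i]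
      have hs : 0 ≤ ∑ j ∈ Finset.univ.filter (fun j => j ≠ i),
          (H i j) ^ 2 / (1 - H j j) ^ 2 :=
        Finset.sum_nonneg fun j _ => by positivity
      have hprod := mul_nonneg (mul_nonneg (sq_nonneg (w i)) (hvnn i)) hs
      nlinarith [hprod]
    linarith
end

section
/- Under homoskedasticity across blocks (Var(τ̂_i) = ν for all i) and equal weights (W = I), the HC2-type estimator S²₃(Q) = B⁻² τ̂ᵀ(I−H_Q)Ψ̃(I−H_Q)τ̂, with Ψ̃ diagonal having entries 1/(1−h_{Qii}), satisfies E[S²₃(Q)] − ν/B = B⁻² f̄ᵀ(I−H_Q)Ψ̃(I−H_Q)f̄ ≥ 0, where f̄ = E[τ̂]. -/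
open Matrix BigOperators MeasureTheory ProbabilityTheory

theorem auxIsUnit_HC2 {B L : ℕ} (Q : Matrix (Fin B) (Fin L) ℝ) (hrank : Q.rank = L) :
    IsUnit (Qᵀ * Q) := by
  have h1 : (Qᵀ * Q).rank = Fintype.card (Fin L) := by
    rw [Matrix.rank_transpose_mul_self, hrank, Fintype.card_fin]
  rw [Matrix.rank] at h1
  have htop : LinearMap.range (Qᵀ * Q).mulVecLin = ⊤ :=
    Submodule.eq_top_of_finrank_eq (by simpa using h1)
  rw [← Matrix.mulVec_surjective_iff_isUnit]
  have hs := LinearMap.range_eq_top.mp htop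
  intro v
  obtain ⟨w, hw⟩ := hs v
  exact ⟨w, hw⟩

theorem auxMoments_HC2 {B : ℕ} {Ω : Type*} [MeasurableSpace Ω] (P : Measure Ω)
    [IsProbabilityMeasure P] (τhat : Fin B → Ω → ℝ)
    (hind : iIndepFun τhat P)
    (hL2 : ∀ i, MemLp (τhat i) 2 P)
    (fbar : Fin B → ℝ) (hmean : ∀ i, ∫ ω, τhat i ω ∂P = fbar i)
    (ν : ℝ) (hvar : ∀ i, variance (τhat i) P = ν) :
    (∀ i j : Fin B, Integrable (fun ω => τhat i ω * τhat j ω) P) ∧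
    (∀ i j : Fin B, ∫ ω, τhat i ω * τhat j ω ∂P = fbar i * fbar j + if i = j then ν else 0) := by
  have hint : ∀ i j, Integrable (fun ω => τhat i ω * τhat j ω) P := by
    intro i j
    have h := ((hL2 j).smul (hL2 i) (r := 1)
       : MemLp (τhat i • τhat j) 1 P)
    rw [memLp_one_iff_integrable] at h
    exact h.congr (Filter.Eventually.of_forall fun ω => by simp [smul_eq_mul])
  refine ⟨hint, fun i j => ?_⟩
  by_cases hij : i = j
  · subst hij
    have hv := variance_eq_sub (hL2 i)
    rw [hvar i] at hv
    simp only [Pi.pow_apply] at hv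
    rw [if_pos rfl]
    have : ∫ ω, τhat i ω * τhat i ω ∂P = ∫ ω, (τhat i ω) ^ 2 ∂P := by
      congr 1; ext ω; ring
    rw [this]
    rw [hmean i] at hv
    linarith
  · have hIF : IndepFun (τhat i) (τhat j) P := hind.indepFun hij
    have h := hIF.integral_fun_mul_eq_mul_integral (hL2 i).1
      (hL2 j).1
    rw [if_neg hij, add_zero, ← hmean i, ← hmean j]
    exact h

/-- Under homoskedasticity (Var(τ̂_i) = ν for all i) and equal weights,
the HC2-type estimator S²₃(Q) = B⁻²τ̂ᵀ(I−H)Ψ̃(I−H)τ̂ with Ψ̃ = diag(1/(1−h_{ii}))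
satisfies E[S²₃(Q)] − ν/B = B⁻² f̄ᵀ(I−H)Ψ̃(I−H)f̄ ≥ 0, where f̄ = E[τ̂]. -/
theorem HC2_estimator_unbiased_homoskedastic {B L : ℕ} (hB : 0 < B) {Ω : Type*}
    [MeasurableSpace Ω] (P : Measure Ω) [IsProbabilityMeasure P]
    (τhat : Fin B → Ω → ℝ)
    (hind : iIndepFun τhat P)
    (hL2 : ∀ i, MemLp (τhat i) 2 P)
    (fbar : Fin B → ℝ) (hmean : ∀ i, ∫ ω, τhat i ω ∂P = fbar i)
    (ν : ℝ) (hvar : ∀ i, variance (τhat i) P = ν)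
    (Q : Matrix (Fin B) (Fin L) ℝ) (hrank : Q.rank = L)
    (H : Matrix (Fin B) (Fin B) ℝ) (hH : H = Q * (Qᵀ * Q)⁻¹ * Qᵀ)
    (hdiag : ∀ i, H i i < 1)
    (Ψt : Matrix (Fin B) (Fin B) ℝ)
    (hΨ : Ψt = Matrix.diagonal fun i => (1 - H i i)⁻¹) :
    (∫ ω, ((B : ℝ) ^ 2)⁻¹ *
          ((fun i => τhat i ω) ⬝ᵥ (((1 - H) * Ψt * (1 - H)) *ᵥ fun i => τhat i ω)) ∂P
        - ν / B
      = ((B : ℝ) ^ 2)⁻¹ * (fbar ⬝ᵥ (((1 - H) * Ψt * (1 - H)) *ᵥ fbar))) ∧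
      0 ≤ ((B : ℝ) ^ 2)⁻¹ * (fbar ⬝ᵥ (((1 - H) * Ψt * (1 - H)) *ᵥ fbar)) := by
  set M : Matrix (Fin B) (Fin B) ℝ := (1 - H) * Ψt * (1 - H) with hM
  -- matrix facts
  have hQQ : IsUnit (Qᵀ * Q) := auxIsUnit_HC2 Q hrank
  have hdet : IsUnit (Qᵀ * Q).det := (Matrix.isUnit_iff_isUnit_det _).mp hQQ
  have hsym : Hᵀ = H := by
    rw [hH]
    simp [Matrix.transpose_mul, Matrix.transpose_nonsing_inv, Matrix.mul_assoc]
  have hidem : H * H = H := by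
    rw [hH]
    calc Q * (Qᵀ * Q)⁻¹ * Qᵀ * (Q * (Qᵀ * Q)⁻¹ * Qᵀ)
        = Q * ((Qᵀ * Q)⁻¹ * ((Qᵀ * Q) * ((Qᵀ * Q)⁻¹ * Qᵀ))) := by
          simp only [Matrix.mul_assoc]
      _ = Q * (Qᵀ * Q)⁻¹ * Qᵀ := by
          rw [← Matrix.mul_assoc ((Qᵀ * Q)⁻¹), Matrix.nonsing_inv_mul _ hdet]
          simp [Matrix.mul_assoc]
  have h2 : (1 - H) * (1 - H) = 1 - H := by
    simp [Matrix.sub_mul, Matrix.mul_sub, hidem]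
  have htr : M.trace = B := by
    have ht1 : M.trace = ((1 - H) * Ψt).trace := by
      rw [hM, Matrix.trace_mul_comm, ← Matrix.mul_assoc, h2]
    rw [ht1, hΨ, Matrix.trace]
    have hone : ∀ i : Fin B, ((1 - H) * Matrix.diagonal fun i => (1 - H i i)⁻¹) i i = 1 := by
      intro i
      rw [Matrix.mul_diagonal]
      have hne : (1 : Matrix (Fin B) (Fin B) ℝ) i i - H i i ≠ 0 := by
        simp only [Matrix.one_apply_eq]
        exact sub_ne_zero.mpr (ne_of_gt (hdiag i))
      simp only [Matrix.sub_apply, Matrix.one_apply_eq] at hne ⊢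
      field_simp
    simp only [Matrix.diag]
    rw [Finset.sum_congr rfl fun i _ => hone i]
    simp
  -- moments
  obtain ⟨hint, hE⟩ := auxMoments_HC2 P τhat hind hL2 fbar hmean ν hvar
  -- pointwise expansion of the quadratic form
  have hexp : ∀ ω : Ω, ((fun i => τhat i ω) ⬝ᵥ (M *ᵥ fun i => τhat i ω))
      = ∑ i, ∑ j, M i j * (τhat i ω * τhat j ω) := by
    intro ω
    simp only [dotProduct, Matrix.mulVec, Finset.mul_sum]
    exact Finset.sum_congr rfl fun i _ => Finset.sum_congr rfl fun j _ => by ring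
  have hkey : ∫ ω, ((fun i => τhat i ω) ⬝ᵥ (M *ᵥ fun i => τhat i ω)) ∂P
      = ∑ i, ∑ j, M i j * (fbar i * fbar j + if i = j then ν else 0) := by
    rw [integral_congr_ae (Filter.Eventually.of_forall hexp)]
    rw [integral_finset_sum _ fun i _ =>
      integrable_finset_sum _ fun j _ => (hint i j).const_mul (M i j)]
    refine Finset.sum_congr rfl fun i _ => ?_
    rw [integral_finset_sum _ fun j _ => (hint i j).const_mul (M i j)]
    refine Finset.sum_congr rfl fun j _ => ?_
    rw [integral_const_mul, hE i j]
  have hsum : ∑ i, ∑ j, M i j * (fbar i * fbar j + if i = j then ν else 0)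
      = (fbar ⬝ᵥ (M *ᵥ fbar)) + ν * B := by
    have hsplit : ∀ i j : Fin B, M i j * (fbar i * fbar j + if i = j then ν else 0)
        = M i j * (fbar i * fbar j) + (if i = j then M i j * ν else 0) := by
      intro i j
      by_cases h : i = j <;> simp [h] <;> ring
    simp only [hsplit, Finset.sum_add_distrib]
    have h1 : ∑ i, ∑ j, M i j * (fbar i * fbar j) = fbar ⬝ᵥ (M *ᵥ fbar) := by
      simp only [dotProduct, Matrix.mulVec, Finset.mul_sum]
      exact Finset.sum_congr rfl fun i _ => Finset.sum_congr rfl fun j _ => by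
        ring
    have h2' : ∑ i : Fin B, ∑ j, (if i = j then M i j * ν else 0) = ν * B := by
      have : ∀ i : Fin B, ∑ j, (if i = j then M i j * ν else 0) = M i i * ν := by
        intro i; simp
      rw [Finset.sum_congr rfl fun i _ => this i, ← Finset.sum_mul]
      rw [show (∑ i, M i i) = M.trace from rfl, htr]
      ring
    rw [h1, h2']
  have hBne : (B : ℝ) ≠ 0 := Nat.cast_ne_zero.mpr hB.ne'
  constructor
  · rw [integral_const_mul, hkey, hsum]
    field_simp
    ring
  · -- positivity
    have hy : fbar ⬝ᵥ (M *ᵥ fbar)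
        = ((1 - H) *ᵥ fbar) ⬝ᵥ (Ψt *ᵥ ((1 - H) *ᵥ fbar)) := by
      rw [hM, ← Matrix.mulVec_mulVec, ← Matrix.mulVec_mulVec]
      rw [Matrix.dotProduct_mulVec fbar (1 - H)]
      congr 1
      rw [← Matrix.mulVec_transpose]
      congr 1
      rw [Matrix.transpose_sub, Matrix.transpose_one, hsym]
    have hpos : 0 ≤ fbar ⬝ᵥ (M *ᵥ fbar) := by
      rw [hy, hΨ]
      set y := (1 - H) *ᵥ fbar
      simp only [dotProduct, Matrix.mulVec_diagonal]
      refine Finset.sum_nonneg fun i _ => ?_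
      have h0 : 0 < (1 - H i i)⁻¹ := inv_pos.mpr (by linarith [hdiag i])
      have : y i * ((1 - H i i)⁻¹ * y i) = (1 - H i i)⁻¹ * (y i) ^ 2 := by ring
      rw [this]
      positivity
    have : (0:ℝ) ≤ ((B : ℝ) ^ 2)⁻¹ := by positivity
    exact mul_nonneg this hpos
end
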